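/- Let G be a countable abelian group acting ergodically measure-preservingly on (X,μ) with a pointwise-ergodic sequence (F_n). If A ⊆ X is measurable with 0 < μ(A) < 1/2 and the lower asymptotic density of the return-time set R_A = {g : μ(A ∩ g⁻¹A) > 0} satisfies d̲(R_A) < (3/2)μ(A), then R_A is a finite-index subgroup of G with index [G : R_A] ≤ 1/μ(A). -/

import Mathlib

open MeasureTheory
open scoped Classical ENNReal

theorem stmt12 {G X : Type*} [AddCommGroup G] [Countable G]
    [MeasurableSpace X] (μ : Measure X) [IsProbabilityMeasure μ]
    (T : G → X → X)
    (hT0 : ∀ x, T 0 x = x)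
    (hTadd : ∀ g h x, T (g + h) x = T g (T h x))
    (hTmp : ∀ g, MeasurePreserving (T g) μ μ)
    (herg : ∀ S : Set X, MeasurableSet S → (∀ g, T g ⁻¹' S = S) → μ S = 0 ∨ μ S = 1)
    (F : ℕ → Finset G) (hFne : ∀ n, (F n).Nonempty)
    (hF : ∀ φ : X → ℝ, Measurable φ → (∃ C, ∀ x, |φ x| ≤ C) →
      ∀ᵐ x ∂μ, Filter.Tendsto
        (fun n => (∑ g ∈ F n, φ (T g x)) / ((F n).card : ℝ))
        Filter.atTop (nhds (∫ x, φ x ∂μ)))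
    (A : Set X) (hA : MeasurableSet A) (hApos : 0 < μ A) (hAhalf : μ A < 1 / 2)
    (hsmall : Filter.liminf
        (fun n => (((F n).filter (fun g => 0 < μ (A ∩ T g ⁻¹' A))).card : ℝ) / ((F n).card : ℝ))
        Filter.atTop < (3 / 2) * (μ A).toReal) :
    ∃ H : AddSubgroup G,
      {g : G | 0 < μ (A ∩ T g ⁻¹' A)} = (H : Set G) ∧
      H.FiniteIndex ∧ (H.index : ℝ) ≤ 1 / (μ A).toReal := by
  classical
  have hTmeas : ∀ g : G, Measurable (T g) := fun g => (hTmp g).measurable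
  have hpre : ∀ (g h : G) (S : Set X), T g ⁻¹' (T h ⁻¹' S) = T (h + g) ⁻¹' S := by
    intro g h S; ext x
    simp [Set.mem_preimage, hTadd]
  have hT0' : T (0 : G) ⁻¹' A = A := by
    ext x; simp [Set.mem_preimage, hT0]
  have hμpre : ∀ (g : G) (S : Set X), MeasurableSet S → μ (T g ⁻¹' S) = μ S :=
    fun g S hS => (hTmp g).measure_preimage hS.nullMeasurableSet
  have hain : ∀ g : G, MeasurableSet (A ∩ T g ⁻¹' A) := fun g => hA.inter ((hTmeas g) hA)
  have hfin : ∀ S : Set X, μ S ≠ ⊤ := fun S => measure_ne_top μ S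
  set R : Set G := {g : G | 0 < μ (A ∩ T g ⁻¹' A)} with hRdef
  set α : ℝ := (μ A).toReal with hα
  have hαpos : 0 < α := ENNReal.toReal_pos hApos.ne' (hfin A)
  have hshift : ∀ g k : G, μ (T g ⁻¹' A ∩ T k ⁻¹' A) = μ (A ∩ T (k - g) ⁻¹' A) := by
    intro g k
    have h1 : T g ⁻¹' (A ∩ T (k - g) ⁻¹' A) = T g ⁻¹' A ∩ T k ⁻¹' A := by
      rw [Set.preimage_inter, hpre g (k - g), sub_add_cancel]
    rw [← h1, hμpre g _ (hain (k - g))]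
  set r : ℕ → ℝ := fun n =>
    (((F n).filter (fun g => 0 < μ (A ∩ T g ⁻¹' A))).card : ℝ) / ((F n).card : ℝ) with hrdef
  have hrle : ∀ n, r n ≤ 1 := by
    intro n
    have hc : (0 : ℝ) < ((F n).card : ℝ) := by
      exact_mod_cast Finset.card_pos.2 (hFne n)
    rw [hrdef, div_le_one hc]
    exact_mod_cast Finset.card_filter_le _ _
  have hrcob : Filter.IsCoboundedUnder (· ≥ ·) Filter.atTop r :=
    Filter.IsBoundedUnder.isCoboundedUnder_ge (Filter.isBoundedUnder_of ⟨1, hrle⟩)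
  -- Key quantitative step: every return time has large intersection measure
  have key : ∀ g ∈ R, α / 2 < (μ (A ∩ T g ⁻¹' A)).toReal := by
    intro g hg
    set U : Set X := A ∪ T g ⁻¹' A with hU
    have hUm : MeasurableSet U := hA.union ((hTmeas g) hA)
    set φ : X → ℝ := U.indicator (fun _ => (1 : ℝ)) with hφ
    have hφm : Measurable φ := measurable_const.indicator hUm
    have hφb : ∃ C, ∀ x, |φ x| ≤ C := by
      refine ⟨1, fun x => ?_⟩
      rw [hφ, Set.indicator_apply]
      split <;> simp
    have hint : ∫ x, φ x ∂μ = (μ U).toReal := by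
      rw [hφ]; exact integral_indicator_one (μ := μ) hUm
    have hae := hF φ hφm hφb
    rw [hint] at hae
    have hbad : ∀ᵐ x ∂μ, ∀ k : G, k ∉ R →
        x ∉ A ∩ T k ⁻¹' A ∧ x ∉ T g ⁻¹' (A ∩ T k ⁻¹' A) := by
      rw [MeasureTheory.ae_all_iff]
      intro k
      by_cases hk : k ∈ R
      · filter_upwards with x hkk
        exact absurd hk hkk
      · have h0 : μ (A ∩ T k ⁻¹' A) = 0 := by
          by_contra h0
          exact hk (pos_iff_ne_zero.2 h0)
        have h1 : μ (T g ⁻¹' (A ∩ T k ⁻¹' A)) = 0 := by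
          rw [hμpre g _ (hain k), h0]
        have h2 : μ ((A ∩ T k ⁻¹' A) ∪ T g ⁻¹' (A ∩ T k ⁻¹' A)) = 0 :=
          measure_union_null h0 h1
        filter_upwards [(MeasureTheory.measure_eq_zero_iff_ae_notMem (μ := μ)).1 h2] with x hx _
        exact ⟨fun h => hx (Or.inl h), fun h => hx (Or.inr h)⟩
    obtain ⟨x, hxA, hx⟩ :=
      MeasureTheory.Measure.exists_mem_of_measure_ne_zero_of_ae hg.ne'
        (MeasureTheory.ae_restrict_of_ae (hae.and hbad))
    have hcomp : ∀ n, (∑ k ∈ F n, φ (T k x)) / ((F n).card : ℝ) ≤ r n := by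
      intro n
      have hc : (0 : ℝ) < ((F n).card : ℝ) := by
        exact_mod_cast Finset.card_pos.2 (hFne n)
      rw [hrdef]
      simp only
      rw [div_le_div_iff_of_pos_right hc]
      have hsum : (∑ k ∈ F n, φ (T k x)) =
          (((F n).filter (fun k => T k x ∈ U)).card : ℝ) := by
        rw [Finset.card_filter]
        push_cast
        refine Finset.sum_congr rfl fun k _ => ?_
        simp [hφ, Set.indicator_apply]
      rw [hsum]
      have hsub : (F n).filter (fun k => T k x ∈ U) ⊆
          (F n).filter (fun k => 0 < μ (A ∩ T k ⁻¹' A)) := by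
        refine Finset.monotone_filter_right _ ?_
        intro k _ hkU
        by_contra hk
        rcases hkU with hkA | hkg
        · exact (hx.2 k hk).1 ⟨hxA.1, hkA⟩
        · refine (hx.2 k hk).2 ?_
          have h1 : x ∈ T (g + k) ⁻¹' A := by
            rw [← hpre k g A]
            exact hkg
          have h2 : T g ⁻¹' (A ∩ T k ⁻¹' A) = T g ⁻¹' A ∩ T (g + k) ⁻¹' A := by
            rw [Set.preimage_inter, hpre g k A, add_comm k g]
          rw [h2]
          exact ⟨hxA.2, h1⟩
      exact_mod_cast Finset.card_le_card hsub
    have hlb : (μ U).toReal ≤ Filter.liminf r Filter.atTop := by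
      rw [← hx.1.liminf_eq]
      exact Filter.liminf_le_liminf (Filter.Eventually.of_forall hcomp)
        hx.1.isBoundedUnder_ge hrcob
    have hsum2 : μ U + μ (A ∩ T g ⁻¹' A) = μ A + μ (T g ⁻¹' A) :=
      measure_union_add_inter A ((hTmeas g) hA)
    have htr : (μ U).toReal + (μ (A ∩ T g ⁻¹' A)).toReal = α + α := by
      rw [← ENNReal.toReal_add (hfin _) (hfin _), hsum2,
        ENNReal.toReal_add (hfin _) (hfin _), hμpre g A hA]
    have hlt : Filter.liminf r Filter.atTop < (3 / 2) * α := hsmall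
    linarith
  -- R is closed under the group operations
  have hzero : (0 : G) ∈ R := by
    have h : A ∩ T (0 : G) ⁻¹' A = A := by rw [hT0', Set.inter_self]
    show 0 < μ (A ∩ T (0 : G) ⁻¹' A)
    rw [h]; exact hApos
  have hneg : ∀ g ∈ R, -g ∈ R := by
    intro g hg
    have h := hshift g 0
    rw [hT0', zero_sub, Set.inter_comm] at h
    show 0 < μ (A ∩ T (-g) ⁻¹' A)
    rw [← h]; exact hg
  have hadd : ∀ g ∈ R, ∀ h ∈ R, g + h ∈ R := by
    intro g hg h hh
    have hB := key g hg
    have hC := key h hh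
    set B : Set X := A ∩ T g ⁻¹' A with hBdef
    set C : Set X := T g ⁻¹' (A ∩ T h ⁻¹' A) with hCdef
    have hCμ : μ C = μ (A ∩ T h ⁻¹' A) := hμpre g _ (hain h)
    have hCm : MeasurableSet C := (hTmeas g) (hain h)
    have hsub : B ∪ C ⊆ T g ⁻¹' A := by
      rintro x (hx | hx)
      · exact hx.2
      · exact hx.1
    have hμU : μ (B ∪ C) ≤ μ A :=
      le_trans (measure_mono hsub) (le_of_eq (hμpre g A hA))
    have hsum := measure_union_add_inter (μ := μ) B hCm
    have hpos : 0 < μ (B ∩ C) := by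
      by_contra h0
      push_neg at h0
      have h0e : μ (B ∩ C) = 0 := le_antisymm h0 zero_le
      have hle : μ B + μ C ≤ μ A := by
        rw [← hsum, h0e, add_zero]; exact hμU
      have hle2 : (μ B + μ C).toReal ≤ α := ENNReal.toReal_mono (hfin A) hle
      rw [ENNReal.toReal_add (hfin _) (hfin _)] at hle2
      rw [hCμ] at hle2
      linarith
    have hsub2 : B ∩ C ⊆ A ∩ T (g + h) ⁻¹' A := by
      rintro x ⟨hxB, hxC⟩
      refine ⟨hxB.1, ?_⟩
      show T (g + h) x ∈ A
      rw [add_comm g h, hTadd h g x]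
      exact hxC.2
    show 0 < μ (A ∩ T (g + h) ⁻¹' A)
    exact lt_of_lt_of_le hpos (measure_mono hsub2)
  set H : AddSubgroup G :=
    { carrier := R
      zero_mem' := hzero
      add_mem' := fun ha hb => hadd _ ha _ hb
      neg_mem' := fun ha => hneg _ ha } with hHdef
  -- pairwise a.e. disjointness of coset translates
  have hcard : ∀ s : Finset (G ⧸ H), (s.card : ℝ) * α ≤ 1 := by
    intro s
    set f : G ⧸ H → Set X := fun q => T q.out ⁻¹' A with hf
    have hfm : ∀ q, MeasurableSet (f q) := fun q => (hTmeas _) hA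
    have hdisj : (↑s : Set (G ⧸ H)).Pairwise (Function.onFun (MeasureTheory.AEDisjoint μ) f) := by
      intro q1 _ q2 _ hne
      have hmem : q2.out - q1.out ∉ R := by
        intro hmem
        apply hne
        have hq : QuotientAddGroup.mk (s := H) q1.out = QuotientAddGroup.mk q2.out := by
          rw [QuotientAddGroup.eq, neg_add_eq_sub]
          exact hmem
        rw [QuotientAddGroup.out_eq', QuotientAddGroup.out_eq'] at hq
        exact hq
      have h0 : μ (A ∩ T (q2.out - q1.out) ⁻¹' A) = 0 := by
        by_contra h0
        exact hmem (pos_iff_ne_zero.2 h0)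
      show μ (f q1 ∩ f q2) = 0
      rw [hf]
      rw [hshift q1.out q2.out]
      exact h0
    have hbu := measure_biUnion_finset₀ hdisj (fun b _ => (hfm b).nullMeasurableSet)
    have hsum : ∑ p ∈ s, μ (f p) = (s.card : ℝ≥0∞) * μ A := by
      rw [Finset.sum_congr rfl (fun p _ => hμpre _ A hA), Finset.sum_const,
        nsmul_eq_mul]
    have hle : (s.card : ℝ≥0∞) * μ A ≤ 1 := by
      rw [← hsum, ← hbu]
      exact (measure_mono (Set.subset_univ _)).trans (le_of_eq measure_univ)
    calc (s.card : ℝ) * α = ((s.card : ℝ≥0∞) * μ A).toReal := by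
          rw [ENNReal.toReal_mul]; simp [hα]
    _ ≤ (1 : ℝ≥0∞).toReal := ENNReal.toReal_mono (by simp) hle
    _ = 1 := by simp
  have hfinq : Finite (G ⧸ H) := by
    by_contra hinf
    rw [not_finite_iff_infinite] at hinf
    obtain ⟨s, hs⟩ := Infinite.exists_subset_card_eq (G ⧸ H) (⌈1 / α⌉₊ + 1)
    have hcs := hcard s
    rw [hs] at hcs
    have h2 : ((⌈1 / α⌉₊ + 1 : ℕ) : ℝ) ≤ 1 / α := by
      rw [le_div_iff₀ hαpos]
      exact hcs
    have h1 := Nat.le_ceil (1 / α)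
    push_cast at h2
    linarith
  haveI := hfinq
  haveI := Fintype.ofFinite (G ⧸ H)
  have hidx : (H.index : ℝ) ≤ 1 / α := by
    have hcs := hcard Finset.univ
    rw [AddSubgroup.index_eq_card, Nat.card_eq_fintype_card, ← Finset.card_univ]
    rw [le_div_iff₀ hαpos]
    exact hcs
  exact ⟨H, rfl, AddSubgroup.finiteIndex_of_finite_quotient, hidx⟩
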